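/- Let n ≥ 1 and q ≥ 2 be integers and let C ⊆ (ZMod q)^n be a nonempty subset. Then there exist m vectors x_1, …, x_m ∈ (ZMod q)^n with m = ⌈(q^n / |C|) · min{ n·ln q, 1 + ln |C| }⌉ such that the union of the translates C + x_1, …, C + x_m is all of (ZMod q)^n. -/

import Mathlib

open Finset

section aux
variable {G : Type*} [AddCommGroup G] [Fintype G] [DecidableEq G]

/-- Double counting: summed over all translates, the number of covered points of `U`. -/
lemma sum_covered (Cf : Finset G) (U : Finset G) :
    ∑ x : G, ((U.filter fun u => ∃ c ∈ Cf, c + x = u).card : ℝ)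
      = (U.card : ℝ) * Cf.card := by
  classical
  have key : ∑ x : G, (U.filter fun u => ∃ c ∈ Cf, c + x = u).card
      = U.card * Cf.card := by
    have h1 : ∀ x : G, (U.filter fun u => ∃ c ∈ Cf, c + x = u).card
        = ∑ u ∈ U, if (∃ c ∈ Cf, c + x = u) then 1 else 0 := by
      intro x; rw [Finset.card_filter]
    simp_rw [h1]
    rw [Finset.sum_comm]
    have h2 : ∀ u : G, ∑ x : G, (if (∃ c ∈ Cf, c + x = u) then 1 else 0)
        = Cf.card := by
      intro u
      rw [← Finset.card_filter]
      have : (Finset.univ.filter fun x : G => ∃ c ∈ Cf, c + x = u)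
          = Cf.image (fun c => u - c) := by
        ext x
        simp only [Finset.mem_filter, Finset.mem_univ, true_and, Finset.mem_image]
        constructor
        · rintro ⟨c, hc, h⟩; exact ⟨c, hc, by rw [← h]; abel⟩
        · rintro ⟨c, hc, h⟩; exact ⟨c, hc, by rw [← h]; abel⟩
      rw [this, Finset.card_image_of_injective _ sub_right_injective]
    calc ∑ u ∈ U, ∑ x : G, (if (∃ c ∈ Cf, c + x = u) then 1 else 0)
        = ∑ u ∈ U, Cf.card := by exact Finset.sum_congr rfl fun u _ => h2 u
      _ = U.card * Cf.card := by rw [Finset.sum_const, smul_eq_mul]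
  calc ∑ x : G, ((U.filter fun u => ∃ c ∈ Cf, c + x = u).card : ℝ)
      = ((∑ x : G, (U.filter fun u => ∃ c ∈ Cf, c + x = u).card : ℕ) : ℝ) := by
        push_cast; ring
    _ = (U.card : ℝ) * Cf.card := by rw [key]; push_cast; ring

lemma greedy_step (Cf : Finset G) (U : Finset G) :
    ∃ x : G, ((U.filter fun u => ¬ ∃ c ∈ Cf, c + x = u).card : ℝ) ≤
      (U.card : ℝ) * (1 - (Cf.card : ℝ) / (Fintype.card G : ℝ)) := by
  classical
  have hN : (0 : ℝ) < (Fintype.card G : ℝ) := by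
    exact_mod_cast Fintype.card_pos
  have havg : ∃ x : G, (U.card : ℝ) * Cf.card / (Fintype.card G : ℝ)
      ≤ ((U.filter fun u => ∃ c ∈ Cf, c + x = u).card : ℝ) := by
    by_contra hcon
    push_neg at hcon
    have : ∑ x : G, ((U.filter fun u => ∃ c ∈ Cf, c + x = u).card : ℝ)
        < ∑ _x : G, (U.card : ℝ) * Cf.card / (Fintype.card G : ℝ) := by
      apply Finset.sum_lt_sum_of_nonempty Finset.univ_nonempty
      intro x _; exact hcon x
    rw [sum_covered, Finset.sum_const, nsmul_eq_mul] at this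
    rw [Finset.card_univ] at this
    rw [mul_div_assoc, mul_comm ((Fintype.card G : ℝ)), mul_assoc,
      div_mul_cancel₀ _ (ne_of_gt hN)] at this
    exact lt_irrefl _ this
  obtain ⟨x, hx⟩ := havg
  refine ⟨x, ?_⟩
  have hsplit : (U.filter fun u => ∃ c ∈ Cf, c + x = u).card
      + (U.filter fun u => ¬ ∃ c ∈ Cf, c + x = u).card = U.card :=
    Finset.card_filter_add_card_filter_not _
  have : ((U.filter fun u => ¬ ∃ c ∈ Cf, c + x = u).card : ℝ)
      = (U.card : ℝ) - (U.filter fun u => ∃ c ∈ Cf, c + x = u).card := by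
    push_cast [← hsplit]; ring
  rw [this]
  have hring : (U.card : ℝ) * (1 - (Cf.card : ℝ) / (Fintype.card G : ℝ))
      = (U.card : ℝ) - (U.card : ℝ) * Cf.card / (Fintype.card G : ℝ) := by ring
  linarith [hx]

lemma greedy_iter (Cf : Finset G) (t : ℕ) (hkN : Cf.card ≤ Fintype.card G) :
    ∃ xs : Fin t → G,
      (((Finset.univ : Finset G).filter
        fun u => ¬ ∃ i, ∃ c ∈ Cf, c + xs i = u).card : ℝ) ≤
      (Fintype.card G : ℝ) * (1 - (Cf.card : ℝ) / (Fintype.card G : ℝ)) ^ t := by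
  classical
  have hN : (0 : ℝ) < (Fintype.card G : ℝ) := by exact_mod_cast Fintype.card_pos
  have hnn : (0:ℝ) ≤ 1 - (Cf.card : ℝ) / (Fintype.card G : ℝ) := by
    have : (Cf.card : ℝ) / (Fintype.card G : ℝ) ≤ 1 := by
      rw [div_le_one hN]; exact_mod_cast hkN
    linarith
  induction t with
  | zero =>
    refine ⟨Fin.elim0, ?_⟩
    rw [pow_zero, mul_one]
    have hle := Finset.card_filter_le (Finset.univ : Finset G)
      (fun u => ¬ ∃ i : Fin 0, ∃ c ∈ Cf, c + Fin.elim0 i = u)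
    rw [Finset.card_univ] at hle
    exact_mod_cast hle
  | succ t ih =>
    obtain ⟨xs, hxs⟩ := ih
    set U := (Finset.univ : Finset G).filter fun u => ¬ ∃ i, ∃ c ∈ Cf, c + xs i = u
      with hU
    obtain ⟨x, hx⟩ := greedy_step Cf U
    refine ⟨Fin.cons (α := fun _ => G) x xs, ?_⟩
    have heq : (Finset.univ : Finset G).filter
        (fun u => ¬ ∃ i, ∃ c ∈ Cf, c + Fin.cons (α := fun _ => G) x xs i = u)
        = U.filter fun u => ¬ ∃ c ∈ Cf, c + x = u := by
      rw [hU, Finset.filter_filter]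
      apply Finset.filter_congr
      intro u _
      simp only [Fin.exists_fin_succ, Fin.cons_zero, Fin.cons_succ]
      push_neg
      exact and_comm
    rw [heq]
    calc ((U.filter fun u => ¬ ∃ c ∈ Cf, c + x = u).card : ℝ)
        ≤ (U.card : ℝ) * (1 - (Cf.card : ℝ) / (Fintype.card G : ℝ)) := hx
      _ ≤ ((Fintype.card G : ℝ) * (1 - (Cf.card : ℝ) / (Fintype.card G : ℝ)) ^ t)
            * (1 - (Cf.card : ℝ) / (Fintype.card G : ℝ)) :=
          mul_le_mul_of_nonneg_right hxs hnn
      _ = (Fintype.card G : ℝ) * (1 - (Cf.card : ℝ) / (Fintype.card G : ℝ)) ^ (t+1) := by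
          ring

end aux

lemma pad_cover {G : Type*} [AddCommGroup G] (C : Set G) {s m : ℕ} (hsm : s ≤ m)
    (xs : Fin s → G) (h : ∀ g : G, ∃ i, ∃ c ∈ C, c + xs i = g) :
    ∃ ys : Fin m → G, (⋃ i, (fun y => y + ys i) '' C) = Set.univ := by
  refine ⟨fun i => if hi : (i : ℕ) < s then xs ⟨i, hi⟩ else 0, ?_⟩
  ext g
  simp only [Set.mem_iUnion, Set.mem_image, Set.mem_univ, iff_true]
  obtain ⟨i, c, hc, hg⟩ := h g
  refine ⟨⟨i, lt_of_lt_of_le i.2 hsm⟩, c, hc, ?_⟩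
  simp only []
  rw [dif_pos (show ((⟨(i : ℕ), lt_of_lt_of_le i.2 hsm⟩ : Fin m) : ℕ) < s from i.2)]
  simpa using hg

set_option maxHeartbeats 1000000 in
theorem stmt9 {n q : ℕ} (hn : 1 ≤ n) (hq : 2 ≤ q)
    (C : Set (Fin n → ZMod q)) (hne : C.Nonempty) :
    ∃ x : Fin (⌈((q : ℝ) ^ n / (C.ncard : ℝ)) *
        min ((n : ℝ) * Real.log q) (1 + Real.log (C.ncard : ℝ))⌉₊) → (Fin n → ZMod q),
      (⋃ i, (fun y => y + x i) '' C) = Set.univ := by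
  classical
  haveI : NeZero q := ⟨by omega⟩
  have hfin : C.Finite := Set.toFinite C
  set Cf : Finset (Fin n → ZMod q) := hfin.toFinset with hCfdef
  have hCmem : ∀ c, c ∈ Cf ↔ c ∈ C := fun c => hfin.mem_toFinset
  have hCc : C.ncard = Cf.card := Set.ncard_eq_toFinset_card C hfin
  have hk1 : 1 ≤ Cf.card := Finset.card_pos.2 (by
    rw [hCfdef, Set.Finite.toFinset_nonempty]; exact hne)
  have hNcard : Fintype.card (Fin n → ZMod q) = q ^ n := by
    rw [Fintype.card_fun, ZMod.card, Fintype.card_fin]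
  have hkN : Cf.card ≤ Fintype.card (Fin n → ZMod q) := Finset.card_le_univ Cf
  -- real abbreviations
  set Nr : ℝ := (Fintype.card (Fin n → ZMod q) : ℝ) with hNrdef
  set kr : ℝ := (Cf.card : ℝ) with hkrdef
  have hNrq : Nr = (q : ℝ) ^ n := by rw [hNrdef, hNcard]; push_cast; ring
  have hkr0 : (0 : ℝ) < kr := by rw [hkrdef]; exact_mod_cast hk1
  have hNr0 : (0 : ℝ) < Nr := by rw [hNrdef]; exact_mod_cast Fintype.card_pos
  have hkNr : kr ≤ Nr := by rw [hkrdef, hNrdef]; exact_mod_cast hkN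
  have hlogq : (0 : ℝ) < Real.log q := Real.log_pos (by exact_mod_cast hq)
  have hlogk : (0 : ℝ) ≤ Real.log kr := Real.log_nonneg (by rw [hkrdef]; exact_mod_cast hk1)
  set A : ℝ := Nr / kr with hAdef
  have hA1 : (1 : ℝ) ≤ A := (one_le_div hkr0).2 hkNr
  have hA0 : (0 : ℝ) < A := lt_of_lt_of_le one_pos hA1
  set L1 : ℝ := (n : ℝ) * Real.log q with hL1def
  set L2 : ℝ := 1 + Real.log kr with hL2def
  have hL10 : 0 < L1 := by
    apply mul_pos _ hlogq; exact_mod_cast hn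
  have hL20 : 0 < L2 := by rw [hL2def]; linarith
  have hVeq : ((q : ℝ) ^ n / (C.ncard : ℝ)) *
      min ((n : ℝ) * Real.log q) (1 + Real.log (C.ncard : ℝ)) = A * min L1 L2 := by
    rw [hCc, hAdef, hNrq, hL1def, hL2def, hkrdef]
  set M : ℕ := ⌈((q : ℝ) ^ n / (C.ncard : ℝ)) *
      min ((n : ℝ) * Real.log q) (1 + Real.log (C.ncard : ℝ))⌉₊ with hMdef
  have hMeq : M = ⌈A * min L1 L2⌉₊ := by rw [hMdef, hVeq]
  have hM1 : 1 ≤ M := by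
    rw [hMeq]
    exact Nat.ceil_pos.2 (mul_pos hA0 (lt_min hL10 hL20))
  have hMV : (A * min L1 L2 : ℝ) ≤ M := by rw [hMeq]; exact Nat.le_ceil _
  -- a generic step: from a cover using `Cf` of size s ≤ M, conclude
  have base : ∀ (s : ℕ), s ≤ M → ∀ xs : Fin s → (Fin n → ZMod q),
      (∀ g : Fin n → ZMod q, ∃ i, ∃ c ∈ Cf, c + xs i = g) →
      ∃ ys : Fin M → (Fin n → ZMod q), (⋃ i, (fun y => y + ys i) '' C) = Set.univ := by
    intro s hsM xs hcov
    exact pad_cover C hsM xs (fun g => by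
      obtain ⟨i, c, hc, hg⟩ := hcov g
      exact ⟨i, c, (hCmem c).1 hc, hg⟩)
  have hpow_exp : ∀ t : ℕ, (1 - kr / Nr) ^ t ≤ Real.exp (-(kr / Nr)) ^ t := by
    intro t
    apply pow_le_pow_left₀
    · have : kr / Nr ≤ 1 := (div_le_one hNr0).2 hkNr
      linarith
    · linarith [Real.add_one_le_exp (-(kr / Nr))]
  have hexp_pow : ∀ t : ℕ, Real.exp (-(kr / Nr)) ^ t = Real.exp ((t : ℝ) * -(kr / Nr)) := by
    intro t; rw [Real.exp_nat_mul]
  rcases le_total L1 L2 with hmin | hmin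
  · -- case 1 : M ≥ A * L1 = (N/k)·log N ; M greedy translates cover everything
    rw [min_eq_left hmin] at hMV
    obtain ⟨xs, hxs⟩ := greedy_iter Cf M hkN
    have hlogN : Real.log Nr = L1 := by
      rw [hNrq, Real.log_pow, hL1def]
    have hlt : Nr * (1 - kr / Nr) ^ M < 1 := by
      rcases eq_or_lt_of_le hkNr with heq | hlt'
      · have hz : (1 : ℝ) - kr / Nr = 0 := by
          rw [heq, div_self (ne_of_gt hNr0)]; ring
        rw [hz, zero_pow (by omega), mul_zero]; norm_num
      · have hx0 : -(kr / Nr) ≠ 0 := by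
          have : 0 < kr / Nr := div_pos hkr0 hNr0
          intro h; rw [neg_eq_zero] at h; linarith
        have h1 : (1 : ℝ) - kr / Nr < Real.exp (-(kr / Nr)) := by
          have := Real.add_one_lt_exp hx0
          linarith
        have h0 : (0 : ℝ) ≤ 1 - kr / Nr := by
          have : kr / Nr ≤ 1 := (div_le_one hNr0).2 hkNr
          linarith
        have h2 : (1 - kr / Nr) ^ M < Real.exp (-(kr / Nr)) ^ M :=
          pow_lt_pow_left₀ h1 h0 (by omega)
        have h4 : Real.exp ((M : ℝ) * -(kr / Nr)) ≤ 1 / Nr := by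
          have hge : Real.log Nr ≤ (M : ℝ) * (kr / Nr) := by
            have : Nr / kr * L1 ≤ (M : ℝ) := hMV
            rw [← hlogN] at this
            rw [div_mul_eq_mul_div, div_le_iff₀ hkr0] at this
            rw [show (M : ℝ) * (kr / Nr) = (M : ℝ) * kr / Nr by ring, le_div_iff₀ hNr0]
            nlinarith
          calc Real.exp ((M : ℝ) * -(kr / Nr)) ≤ Real.exp (-(Real.log Nr)) := by
                apply Real.exp_le_exp.2; rw [mul_neg]; linarith
            _ = 1 / Nr := by rw [Real.exp_neg, Real.exp_log hNr0, one_div]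
        calc Nr * (1 - kr / Nr) ^ M < Nr * Real.exp (-(kr / Nr)) ^ M :=
              mul_lt_mul_of_pos_left h2 hNr0
          _ = Nr * Real.exp ((M : ℝ) * -(kr / Nr)) := by rw [hexp_pow]
          _ ≤ Nr * (1 / Nr) := mul_le_mul_of_nonneg_left h4 (le_of_lt hNr0)
          _ = 1 := by field_simp
    have hcard0 : ((Finset.univ : Finset (Fin n → ZMod q)).filter
        fun u => ¬ ∃ i, ∃ c ∈ Cf, c + xs i = u).card = 0 := by
      have hlt1 : (((Finset.univ : Finset (Fin n → ZMod q)).filter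
          fun u => ¬ ∃ i, ∃ c ∈ Cf, c + xs i = u).card : ℝ) < 1 :=
        lt_of_le_of_lt hxs hlt
      exact_mod_cast Nat.lt_one_iff.1 (by exact_mod_cast hlt1)
    have hcov : ∀ g : Fin n → ZMod q, ∃ i, ∃ c ∈ Cf, c + xs i = g := by
      intro g
      by_contra hg
      have : g ∈ (Finset.univ : Finset (Fin n → ZMod q)).filter
          fun u => ¬ ∃ i, ∃ c ∈ Cf, c + xs i = u :=
        Finset.mem_filter.2 ⟨Finset.mem_univ g, hg⟩
      rw [Finset.card_eq_zero] at hcard0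
      rw [hcard0] at this
      exact Finset.notMem_empty g this
    exact base M le_rfl xs hcov
  · -- case 2 : M ≥ A * (1 + log k); greedy for t steps then patch leftovers
    rw [min_eq_right hmin] at hMV
    set t : ℕ := ⌈A * Real.log kr⌉₊ with htdef
    obtain ⟨xs, hxs⟩ := greedy_iter Cf t hkN
    set R : Finset (Fin n → ZMod q) := (Finset.univ : Finset (Fin n → ZMod q)).filter
      (fun u => ¬ ∃ i, ∃ c ∈ Cf, c + xs i = u) with hRdef
    -- bound the number of uncovered points by A = N/k
    have hRA : (R.card : ℝ) ≤ A := by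
      have h4 : Real.exp ((t : ℝ) * -(kr / Nr)) ≤ 1 / kr := by
        have hge : Real.log kr ≤ (t : ℝ) * (kr / Nr) := by
          have h5 : A * Real.log kr ≤ (t : ℝ) := Nat.le_ceil _
          rw [hAdef, div_mul_eq_mul_div, div_le_iff₀ hkr0] at h5
          rw [show (t : ℝ) * (kr / Nr) = (t : ℝ) * kr / Nr by ring, le_div_iff₀ hNr0]
          nlinarith
        calc Real.exp ((t : ℝ) * -(kr / Nr)) ≤ Real.exp (-(Real.log kr)) := by
              apply Real.exp_le_exp.2; rw [mul_neg]; linarith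
          _ = 1 / kr := by rw [Real.exp_neg, Real.exp_log hkr0, one_div]
      calc (R.card : ℝ) ≤ Nr * (1 - kr / Nr) ^ t := hxs
        _ ≤ Nr * Real.exp (-(kr / Nr)) ^ t :=
            mul_le_mul_of_nonneg_left (hpow_exp t) (le_of_lt hNr0)
        _ = Nr * Real.exp ((t : ℝ) * -(kr / Nr)) := by rw [hexp_pow]
        _ ≤ Nr * (1 / kr) := mul_le_mul_of_nonneg_left h4 (le_of_lt hNr0)
        _ = A := by rw [hAdef, mul_one_div]
    have hM2 : M = ⌈A * L2⌉₊ := by rw [hMeq, min_eq_right hmin]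
    have hsM : t + R.card ≤ M := by
      have h0 : (0 : ℝ) ≤ A * Real.log kr := mul_nonneg (le_of_lt hA0) hlogk
      have h1 : t + R.card = ⌈A * Real.log kr + (R.card : ℕ)⌉₊ := by
        rw [Nat.ceil_add_natCast h0]
      rw [h1, hM2]
      apply Nat.ceil_mono
      rw [hL2def]
      have hexp : A * (1 + Real.log kr) = A + A * Real.log kr := by ring
      rw [hexp]
      linarith [hRA]
    -- build the combined family: greedy translates then one per uncovered point
    obtain ⟨c0, hc0⟩ := hne
    have hc0f : c0 ∈ Cf := (hCmem c0).2 hc0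
    set e := R.equivFin with hedef
    set ys : Fin (t + R.card) → (Fin n → ZMod q) := fun i =>
      if hi : (i : ℕ) < t then xs ⟨i, hi⟩
      else ((e.symm ⟨(i : ℕ) - t, by omega⟩ : R) : Fin n → ZMod q) - c0 with hysdef
    have hcov : ∀ g : Fin n → ZMod q, ∃ i, ∃ c ∈ Cf, c + ys i = g := by
      intro g
      by_cases hg : ∃ i, ∃ c ∈ Cf, c + xs i = g
      · obtain ⟨i, c, hc, hgi⟩ := hg
        refine ⟨⟨i, by omega⟩, c, hc, ?_⟩
        rw [hysdef]
        simp only []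
        rw [dif_pos (show ((⟨(i : ℕ), by omega⟩ : Fin (t + R.card)) : ℕ) < t from i.2)]
        simpa using hgi
      · have hgR : g ∈ R := by rw [hRdef]; exact Finset.mem_filter.2 ⟨Finset.mem_univ g, hg⟩
        set j : Fin R.card := e ⟨g, hgR⟩ with hjdef
        refine ⟨⟨t + (j : ℕ), by omega⟩, c0, hc0f, ?_⟩
        rw [hysdef]
        simp only []
        rw [dif_neg (by omega)]
        simp only [Fin.val_mk, Nat.add_sub_cancel_left, Fin.eta, hjdef, Equiv.symm_apply_apply]
        abel
    exact base (t + R.card) hsM ys hcov
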